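/- Let n > 3, let G be a group, let s_0', s_1, …, s_{n-1} ∈ G satisfy the type D Coxeter relations, and define r̄_2 = s_0' and r_k = s_1 (s_2 s_1) (s_3 s_2 s_1) ⋯ (s_{k-1} s_{k-2} ⋯ s_2 s_1) for k ∈ [2,n]. Then the elements r̄_2, r_2, …, r_n satisfy the relations (Rd1)–(Rd10). -/

import Mathlib

/-- The word `s₁ (s₂ s₁) (s₃ s₂ s₁) ⋯ (s_{k-1} s_{k-2} ⋯ s₂ s₁)` in a group. -/
def rwordA {G : Type*} [Group G] (s : ℕ → G) (k : ℕ) : G :=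
  ((List.range (k - 1)).map (fun j => ((List.range (j + 1)).map (fun i => s (j + 1 - i))).prod)).prod

namespace RwordAux

variable {G : Type*} [Group G]

def tword (s : ℕ → G) (k : ℕ) : G := ((List.range k).map (fun i => s (k - i))).prod
def uword (s : ℕ → G) (k : ℕ) : G := ((List.range k).map (fun i => s (i + 1))).prod

@[simp] lemma tword_zero (s : ℕ → G) : tword s 0 = 1 := rfl
@[simp] lemma uword_zero (s : ℕ → G) : uword s 0 = 1 := rfl
@[simp] lemma rword_zero (s : ℕ → G) : rwordA s 0 = 1 := rfl
@[simp] lemma rword_one (s : ℕ → G) : rwordA s 1 = 1 := rfl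

lemma tword_succ (s : ℕ → G) (k : ℕ) : tword s (k + 1) = s (k + 1) * tword s k := by
  unfold tword
  rw [List.range_succ_eq_map, List.map_cons, List.map_map, List.prod_cons]
  congr 2
  ext i
  simp [Function.comp, Nat.succ_sub_succ]

lemma uword_succ (s : ℕ → G) (k : ℕ) : uword s (k + 1) = uword s k * s (k + 1) := by
  unfold uword
  rw [List.range_succ, List.map_append, List.prod_append]
  simp

lemma rword_eq (s : ℕ → G) (k : ℕ) :
    rwordA s k = ((List.range (k - 1)).map (fun j => tword s (j + 1))).prod := rfl

lemma rword_succ (s : ℕ → G) (k : ℕ) : rwordA s (k + 1) = rwordA s k * tword s k := by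
  cases k with
  | zero => simp
  | succ m =>
    rw [rword_eq, rword_eq]
    simp only [Nat.add_sub_cancel]
    rw [List.range_succ, List.map_append, List.prod_append]
    simp

lemma rword_two (s : ℕ → G) : rwordA s 2 = s 1 := by
  rw [rword_succ]; simp [tword_succ]

lemma rword_three (s : ℕ → G) : rwordA s 3 = s 1 * (s 2 * s 1) := by
  rw [rword_succ, rword_two, tword_succ]
  simp [tword_succ]

section Rel

variable {n : ℕ} {s : ℕ → G}
  (hs : ∀ i, 1 ≤ i → i < n → s i * s i = 1)
  (hb : ∀ i, 1 ≤ i → i + 1 < n → s i * s (i + 1) * s i = s (i + 1) * s i * s (i + 1))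
  (hc : ∀ i j, 1 ≤ i → i + 2 ≤ j → j < n → s i * s j = s j * s i)

include hs hb hc
set_option linter.unusedSectionVars false

lemma comm_tword (k j : ℕ) (h : k + 2 ≤ j) (hj : j < n) :
    tword s k * s j = s j * tword s k := by
  induction k with
  | zero => simp
  | succ m ih =>
    rw [tword_succ, mul_assoc, ih (by omega), ← mul_assoc, ← mul_assoc,
      hc (m + 1) j (by omega) (by omega) hj]

lemma comm_uword (k j : ℕ) (h : k + 2 ≤ j) (hj : j < n) :
    uword s k * s j = s j * uword s k := by
  induction k with
  | zero => simp
  | succ m ih =>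
    rw [uword_succ, mul_assoc, hc (m + 1) j (by omega) (by omega) hj, ← mul_assoc,
      ih (by omega), mul_assoc]

lemma comm_rword (k j : ℕ) (h : k + 1 ≤ j) (hj : j < n) :
    rwordA s k * s j = s j * rwordA s k := by
  induction k with
  | zero => simp
  | succ m ih =>
    rw [rword_succ, mul_assoc, comm_tword hs hb hc m j (by omega) hj, ← mul_assoc,
      ih (by omega), mul_assoc]

lemma tmul_top (m : ℕ) (hm : m + 2 < n) :
    tword s (m + 1) * s (m + 2) = s (m + 1) * (s (m + 2) * (s (m + 1) * tword s (m + 1))) := by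
  rw [tword_succ, mul_assoc, comm_tword hs hb hc m (m + 2) (by omega) (by omega),
    ← mul_assoc (s (m + 1)) (s (m + 1)), hs (m + 1) (by omega) (by omega), one_mul]

lemma umul_top (m : ℕ) (hm : m + 2 < n) :
    s (m + 2) * uword s (m + 1) = uword s (m + 1) * (s (m + 1) * (s (m + 2) * s (m + 1))) := by
  rw [uword_succ, ← mul_assoc, ← comm_uword hs hb hc m (m + 2) (by omega) (by omega),
    mul_assoc, mul_assoc (uword s m) (s (m + 1)), ← mul_assoc (s (m + 1)) (s (m + 1)),
    hs (m + 1) (by omega) (by omega), one_mul]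

lemma tmul (k i : ℕ) (h2 : 2 ≤ i) (hik : i ≤ k) (hk : k < n) :
    tword s k * s i = s (i - 1) * tword s k := by
  induction k generalizing i with
  | zero => omega
  | succ m ih =>
    rcases Nat.lt_or_ge i (m + 1) with h | h
    · rw [tword_succ, mul_assoc, ih i h2 (by omega) (by omega), ← mul_assoc,
        ← hc (i - 1) (m + 1) (by omega) (by omega) (by omega), mul_assoc]
    · have hi : i = m + 1 := by omega
      subst hi
      obtain ⟨p, rfl⟩ : ∃ p, m = p + 1 := ⟨m - 1, by omega⟩
      calc tword s (p + 2) * s (p + 2)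
          = s (p + 2) * (tword s (p + 1) * s (p + 2)) := by
            rw [tword_succ]; simp only [mul_assoc]
        _ = s (p + 2) * (s (p + 1) * (s (p + 2) * (s (p + 1) * tword s (p + 1)))) := by
            rw [tmul_top hs hb hc p (by omega)]
        _ = (s (p + 2) * s (p + 1) * s (p + 2)) * (s (p + 1) * tword s (p + 1)) := by
            simp only [mul_assoc]
        _ = (s (p + 1) * s (p + 2) * s (p + 1)) * (s (p + 1) * tword s (p + 1)) := by
            rw [← hb (p + 1) (by omega) (by omega)]
        _ = s (p + 1) * s (p + 2) * ((s (p + 1) * s (p + 1)) * tword s (p + 1)) := by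
            simp only [mul_assoc]
        _ = s (p + 1) * (s (p + 2) * tword s (p + 1)) := by
            rw [hs (p + 1) (by omega) (by omega), one_mul, mul_assoc]
        _ = s (p + 2 - 1) * tword s (p + 2) := by
            rw [tword_succ s (p + 1), show p + 2 - 1 = p + 1 from rfl]

lemma umul (k i : ℕ) (h2 : 2 ≤ i) (hik : i ≤ k) (hk : k < n) :
    s i * uword s k = uword s k * s (i - 1) := by
  induction k generalizing i with
  | zero => omega
  | succ m ih =>
    rcases Nat.lt_or_ge i (m + 1) with h | h
    · rw [uword_succ, ← mul_assoc, ih i h2 (by omega) (by omega), mul_assoc,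
        hc (i - 1) (m + 1) (by omega) (by omega) (by omega), ← mul_assoc]
    · have hi : i = m + 1 := by omega
      subst hi
      obtain ⟨p, rfl⟩ : ∃ p, m = p + 1 := ⟨m - 1, by omega⟩
      calc s (p + 2) * uword s (p + 2)
          = s (p + 2) * uword s (p + 1) * s (p + 2) := by rw [uword_succ, ← mul_assoc]
        _ = uword s (p + 1) * (s (p + 1) * (s (p + 2) * s (p + 1))) * s (p + 2) := by
            rw [umul_top hs hb hc p (by omega)]
        _ = uword s (p + 1) * ((s (p + 1) * s (p + 2) * s (p + 1)) * s (p + 2)) := by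
            simp only [mul_assoc]
        _ = uword s (p + 1) * ((s (p + 2) * s (p + 1) * s (p + 2)) * s (p + 2)) := by
            rw [hb (p + 1) (by omega) (by omega)]
        _ = uword s (p + 1) * (s (p + 2) * s (p + 1) * (s (p + 2) * s (p + 2))) := by
            simp only [mul_assoc]
        _ = uword s (p + 1) * (s (p + 2) * s (p + 1)) := by
            rw [hs (p + 2) (by omega) (by omega), mul_one]
        _ = uword s (p + 2) * s (p + 2 - 1) := by
            rw [uword_succ s (p + 1), show p + 2 - 1 = p + 1 from rfl]
            simp only [mul_assoc]

lemma rword_left (k : ℕ) (hk : k < n) :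
    rwordA s (k + 1) = uword s k * rwordA s k := by
  induction k with
  | zero => simp [rword_succ]
  | succ m ih =>
    calc rwordA s (m + 2)
        = rwordA s (m + 1) * tword s (m + 1) := rword_succ s (m + 1)
      _ = uword s m * rwordA s m * (s (m + 1) * tword s m) := by
          rw [ih (by omega), tword_succ]
      _ = uword s m * (rwordA s m * s (m + 1)) * tword s m := by simp only [mul_assoc]
      _ = uword s m * (s (m + 1) * rwordA s m) * tword s m := by
          rw [comm_rword hs hb hc m (m + 1) (by omega) (by omega)]
      _ = uword s m * s (m + 1) * (rwordA s m * tword s m) := by simp only [mul_assoc]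
      _ = uword s (m + 1) * rwordA s (m + 1) := by rw [uword_succ, rword_succ]

lemma ut (k : ℕ) (hk : k < n) : uword s k * tword s k = 1 := by
  induction k with
  | zero => simp
  | succ m ih =>
    rw [uword_succ, tword_succ, mul_assoc, ← mul_assoc (s (m + 1)),
      hs (m + 1) (by omega) (by omega), one_mul, ih (by omega)]

lemma rconj (k : ℕ) (hk : k ≤ n) :
    ∀ i, 1 ≤ i → i + 1 ≤ k → rwordA s k * s i = s (k - i) * rwordA s k := by
  induction k with
  | zero => intro i h1 h2; omega
  | succ m ih =>
    intro i h1 hik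
    rcases Nat.lt_or_ge 1 i with h | h
    · rw [rword_succ, mul_assoc, tmul hs hb hc m i (by omega) (by omega) (by omega),
        ← mul_assoc, ih (by omega) (i - 1) (by omega) (by omega), mul_assoc, ← rword_succ]
      congr 2
      omega
    · have hi : i = 1 := by omega
      subst hi
      rcases Nat.lt_or_ge m 2 with hm | hm
      · have hm1 : m = 1 := by omega
        subst hm1
        rw [rword_two]
      · have key : s m * rwordA s (m + 1) = rwordA s (m + 1) * s 1 := by
          calc s m * rwordA s (m + 1)
              = s m * (uword s m * rwordA s m) := by
                rw [rword_left hs hb hc m (by omega)]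
            _ = uword s m * s (m - 1) * rwordA s m := by
                rw [← mul_assoc, umul hs hb hc m m (by omega) le_rfl (by omega)]
            _ = uword s m * (rwordA s m * s 1) := by
                rw [mul_assoc, ← ih (by omega) 1 (by omega) (by omega)]
            _ = rwordA s (m + 1) * s 1 := by
                rw [← mul_assoc, ← rword_left hs hb hc m (by omega)]
        rw [← key, Nat.add_sub_cancel]

lemma rsq (k : ℕ) (hk : k ≤ n) : rwordA s k * rwordA s k = 1 := by
  induction k with
  | zero => simp
  | succ m ih =>
    have h1 := rword_left hs hb hc m (by omega)
    have h2 := rword_succ s m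
    nth_rewrite 1 [h1]
    rw [h2, mul_assoc, ← mul_assoc (rwordA s m), ih (by omega), one_mul,
      ut hs hb hc m (by omega)]

lemma rconj1 (k : ℕ) (h2 : 2 ≤ k) (hk : k ≤ n) :
    rwordA s k * (s 1 * rwordA s k) = s (k - 1) := by
  rw [← mul_assoc, rconj hs hb hc k hk 1 le_rfl h2, mul_assoc, rsq hs hb hc k hk, mul_one]

end Rel
end RwordAux

theorem stmt18 (n : ℕ) (hn : 3 < n) (G : Type*) [Group G] (s0' : G) (s : ℕ → G)
    (hD1 : ∀ i, 1 ≤ i → i ≤ n - 1 → s i * s i = 1)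
    (hD2 : s0' * s0' = 1)
    (hD3 : (s0' * s 2) ^ 3 = 1)
    (hD4 : ∀ i, 1 ≤ i → i ≤ n - 2 → (s i * s (i + 1)) ^ 3 = 1)
    (hD5 : ∀ i, i = 1 ∨ (3 ≤ i ∧ i ≤ n - 1) → (s0' * s i) ^ 2 = 1)
    (hD6 : ∀ i j, 1 ≤ i → i ≤ n - 1 → i + 2 ≤ j → j ≤ n - 1 → (s i * s j) ^ 2 = 1) :
    let rb : G := s0'
    let r : ℕ → G := rwordA s
    (rb * rb = 1) ∧
    (∀ k, 2 ≤ k → k ≤ n → r k * r k = 1) ∧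
    ((rb * r 2) ^ 2 = 1) ∧
    ((r 2 * r 3) ^ 3 = 1) ∧
    (∀ k, 4 ≤ k → k ≤ n → (r 2 * r k) ^ 4 = 1) ∧
    ((rb * r 3 * r 2 * r 3) ^ 3 = 1) ∧
    (∀ k, 4 ≤ k → k ≤ n → (rb * r k * r 2 * r k) ^ 2 = 1) ∧
    (∀ k, 3 ≤ k → k ≤ n - 1 →
      r k * r (k - 1) * r (k + 1) * r 2 * r (k + 1) * r k * r (k + 1) = 1) ∧
    (∀ k, 3 ≤ k → k ≤ n - 1 →
      (r k * r (k - 1)) ^ 2 * r (k + 1) * r 3 * r (k + 1) * r (k - 1) * r (k + 1) = 1) ∧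
    (∀ l k, 4 ≤ l → l ≤ n → 3 ≤ k → k ≤ l - 2 →
      r l * r (l - k + 2) * r 2 * r (l - k + 2) * r l * r k * r 2 * r k = 1) := by
  intro rb r
  open RwordAux in
  have hs : ∀ i, 1 ≤ i → i < n → s i * s i = 1 := fun i h1 h2 => hD1 i h1 (by omega)
  have hb : ∀ i, 1 ≤ i → i + 1 < n →
      s i * s (i + 1) * s i = s (i + 1) * s i * s (i + 1) := by
    intro i h1 h2
    have e1 : (s i)⁻¹ = s i := inv_eq_of_mul_eq_one_right (hs i h1 (by omega))
    have e2 : (s (i + 1))⁻¹ = s (i + 1) :=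
      inv_eq_of_mul_eq_one_right (hs (i + 1) (by omega) (by omega))
    have h3 := hD4 i h1 (by omega)
    rw [pow_succ, pow_two] at h3
    have key : (s i * s (i + 1) * s i) * (s (i + 1) * s i * s (i + 1)) = 1 := by
      simp only [mul_assoc] at h3 ⊢
      exact h3
    have hinv : (s i * s (i + 1) * s i)⁻¹ = s (i + 1) * s i * s (i + 1) :=
      inv_eq_of_mul_eq_one_right key
    have e : s i * (s (i + 1) * s i) = s (i + 1) * s i * s (i + 1) := by
      rw [← hinv, mul_inv_rev, mul_inv_rev, e1, e2]
    rw [mul_assoc]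
    exact e
  have hc : ∀ i j, 1 ≤ i → i + 2 ≤ j → j < n → s i * s j = s j * s i := by
    intro i j h1 h2 h3
    have e1 : (s i)⁻¹ = s i := inv_eq_of_mul_eq_one_right (hs i h1 (by omega))
    have e2 : (s j)⁻¹ = s j := inv_eq_of_mul_eq_one_right (hs j (by omega) (by omega))
    have h22 := hD6 i j h1 (by omega) h2 (by omega)
    rw [pow_two] at h22
    have hinv : (s i * s j)⁻¹ = s i * s j := inv_eq_of_mul_eq_one_right h22
    have e : s j * s i = s i * s j := by
      rw [← hinv, mul_inv_rev, e1, e2]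
    exact e.symm
  refine ⟨hD2, fun k _ hk => rsq hs hb hc k hk, ?_, ?_, ?_, ?_, ?_, ?_, ?_, ?_⟩
  · -- Rd3
    show (s0' * rwordA s 2) ^ 2 = 1
    rw [rword_two]
    exact hD5 1 (Or.inl rfl)
  · -- Rd4
    show (rwordA s 2 * rwordA s 3) ^ 3 = 1
    rw [rword_two, rword_three]
    have e : s 1 * (s 1 * (s 2 * s 1)) = s 2 * s 1 := by
      rw [← mul_assoc, hs 1 (by omega) (by omega), one_mul]
    rw [e]
    have h312 := hD4 1 (by omega) (by omega)
    rw [pow_succ, pow_two] at h312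
    simp only [mul_assoc] at h312
    rw [pow_succ, pow_two]
    have h' : s 2 * (s 1 * (s 2 * (s 1 * s 2))) = s 1 := by
      have h'' := congrArg (fun x => s 1 * x) h312
      rw [← mul_assoc, hs 1 (by omega) (by omega), one_mul, mul_one] at h''
      exact h''
    calc (s 2 * s 1) * (s 2 * s 1) * (s 2 * s 1)
        = (s 2 * (s 1 * (s 2 * (s 1 * s 2)))) * s 1 := by simp only [mul_assoc]
      _ = s 1 * s 1 := by rw [h']
      _ = 1 := hs 1 (by omega) (by omega)
  · -- Rd5
    intro k hk4 hk
    show (rwordA s 2 * rwordA s k) ^ 4 = 1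
    rw [rword_two]
    have hx : (s 1 * rwordA s k) ^ 2 = s 1 * s (k - 1) := by
      rw [pow_two, mul_assoc, rconj1 hs hb hc k (by omega) hk]
    rw [show (4 : ℕ) = 2 * 2 from rfl, pow_mul, hx]
    exact hD6 1 (k - 1) le_rfl (by omega) (by omega) (by omega)
  · -- Rd6
    show (s0' * rwordA s 3 * rwordA s 2 * rwordA s 3) ^ 3 = 1
    have h32 : rwordA s 3 * rwordA s 2 * rwordA s 3 = s 2 := by
      rw [rword_two, rword_three]
      calc (s 1 * (s 2 * s 1)) * s 1 * (s 1 * (s 2 * s 1))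
          = (s 1 * s 2 * s 1) * (s 1 * s 1) * (s 2 * s 1) := by simp only [mul_assoc]
        _ = (s 1 * s 2 * s 1) * (s 2 * s 1) := by
            rw [hs 1 (by omega) (by omega), mul_one]
        _ = (s 2 * s 1 * s 2) * (s 2 * s 1) := by rw [hb 1 (by omega) (by omega)]
        _ = s 2 * s 1 * (s 2 * s 2) * s 1 := by simp only [mul_assoc]
        _ = s 2 * (s 1 * s 1) := by
            rw [hs 2 (by omega) (by omega), mul_one, mul_assoc]
        _ = s 2 := by rw [hs 1 (by omega) (by omega), mul_one]
    have e : s0' * rwordA s 3 * rwordA s 2 * rwordA s 3 = s0' * s 2 := by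
      rw [mul_assoc, mul_assoc, ← mul_assoc (rwordA s 3), h32]
    rw [e]
    exact hD3
  · -- Rd7
    intro k hk4 hk
    show (s0' * rwordA s k * rwordA s 2 * rwordA s k) ^ 2 = 1
    have e : s0' * rwordA s k * rwordA s 2 * rwordA s k = s0' * s (k - 1) := by
      rw [rword_two, mul_assoc, mul_assoc, rconj1 hs hb hc k (by omega) hk]
    rw [e]
    exact hD5 (k - 1) (Or.inr ⟨by omega, by omega⟩)
  · -- Rd8
    intro k hk3 hk
    obtain ⟨m, rfl⟩ : ∃ m, k = m + 3 := ⟨k - 3, by omega⟩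
    show rwordA s (m + 3) * rwordA s (m + 2) * rwordA s (m + 4) * rwordA s 2 *
        rwordA s (m + 4) * rwordA s (m + 3) * rwordA s (m + 4) = 1
    rw [rword_two]
    have h1 : rwordA s (m + 4) * (s 1 * rwordA s (m + 4)) = s (m + 3) :=
      rconj1 hs hb hc (m + 4) (by omega) (by omega)
    have h2 : rwordA s (m + 3) * rwordA s (m + 4) = tword s (m + 3) := by
      rw [rword_succ s (m + 3), ← mul_assoc, rsq hs hb hc (m + 3) (by omega), one_mul]
    calc rwordA s (m + 3) * rwordA s (m + 2) * rwordA s (m + 4) * s 1 *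
          rwordA s (m + 4) * rwordA s (m + 3) * rwordA s (m + 4)
        = rwordA s (m + 3) * (rwordA s (m + 2) *
            ((rwordA s (m + 4) * (s 1 * rwordA s (m + 4))) *
              (rwordA s (m + 3) * rwordA s (m + 4)))) := by simp only [mul_assoc]
      _ = rwordA s (m + 3) * (rwordA s (m + 2) * (s (m + 3) * tword s (m + 3))) := by
          rw [h1, h2]
      _ = rwordA s (m + 3) * ((rwordA s (m + 2) * s (m + 3)) *
            (s (m + 3) * tword s (m + 2))) := by
          rw [tword_succ s (m + 2)]; simp only [mul_assoc]
      _ = rwordA s (m + 3) * ((s (m + 3) * rwordA s (m + 2)) *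
            (s (m + 3) * tword s (m + 2))) := by
          rw [comm_rword hs hb hc (m + 2) (m + 3) (by omega) (by omega)]
      _ = rwordA s (m + 3) * (s (m + 3) * ((rwordA s (m + 2) * s (m + 3)) *
            tword s (m + 2))) := by simp only [mul_assoc]
      _ = rwordA s (m + 3) * (s (m + 3) * ((s (m + 3) * rwordA s (m + 2)) *
            tword s (m + 2))) := by
          rw [comm_rword hs hb hc (m + 2) (m + 3) (by omega) (by omega)]
      _ = rwordA s (m + 3) * ((s (m + 3) * s (m + 3)) *
            (rwordA s (m + 2) * tword s (m + 2))) := by simp only [mul_assoc]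
      _ = rwordA s (m + 3) * (rwordA s (m + 2) * tword s (m + 2)) := by
          rw [hs (m + 3) (by omega) (by omega), one_mul]
      _ = rwordA s (m + 3) * rwordA s (m + 3) := by rw [← rword_succ s (m + 2)]
      _ = 1 := rsq hs hb hc (m + 3) (by omega)
  · -- Rd9
    intro k hk3 hk
    obtain ⟨m, rfl⟩ : ∃ m, k = m + 3 := ⟨k - 3, by omega⟩
    show (rwordA s (m + 3) * rwordA s (m + 2)) ^ 2 * rwordA s (m + 4) * rwordA s 3 *
        rwordA s (m + 4) * rwordA s (m + 2) * rwordA s (m + 4) = 1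
    have hU : rwordA s (m + 3) * rwordA s (m + 2) = uword s (m + 2) := by
      rw [rword_left hs hb hc (m + 2) (by omega), mul_assoc,
        rsq hs hb hc (m + 2) (by omega), mul_one]
    have hc1 : rwordA s (m + 4) * s 1 = s (m + 3) * rwordA s (m + 4) :=
      rconj hs hb hc (m + 4) (by omega) 1 (by omega) (by omega)
    have hc2 : rwordA s (m + 4) * s 2 = s (m + 2) * rwordA s (m + 4) :=
      rconj hs hb hc (m + 4) (by omega) 2 (by omega) (by omega)
    have hC3 : rwordA s (m + 4) * rwordA s 3 * rwordA s (m + 4) =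
        s (m + 3) * (s (m + 2) * s (m + 3)) := by
      rw [rword_three]
      calc rwordA s (m + 4) * (s 1 * (s 2 * s 1)) * rwordA s (m + 4)
          = (rwordA s (m + 4) * s 1) * (s 2 * (s 1 * rwordA s (m + 4))) := by
            simp only [mul_assoc]
        _ = s (m + 3) * ((rwordA s (m + 4) * s 2) * (s 1 * rwordA s (m + 4))) := by
            rw [hc1]; simp only [mul_assoc]
        _ = s (m + 3) * (s (m + 2) * ((rwordA s (m + 4) * s 1) * rwordA s (m + 4))) := by
            rw [hc2]; simp only [mul_assoc]
        _ = s (m + 3) * (s (m + 2) * (s (m + 3) *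
              (rwordA s (m + 4) * rwordA s (m + 4)))) := by
            rw [hc1]; simp only [mul_assoc]
        _ = s (m + 3) * (s (m + 2) * s (m + 3)) := by
            rw [rsq hs hb hc (m + 4) (by omega), mul_one]
    have hBT : rwordA s (m + 2) * rwordA s (m + 4) = tword s (m + 2) * tword s (m + 3) := by
      rw [rword_succ s (m + 3), rword_succ s (m + 2), ← mul_assoc, ← mul_assoc,
        rsq hs hb hc (m + 2) (by omega), one_mul]
    have htt : tword s (m + 2) * s (m + 3) =
        s (m + 2) * (s (m + 3) * (s (m + 2) * tword s (m + 2))) :=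
      tmul_top hs hb hc (m + 1) (by omega)
    have hW : s (m + 3) * (s (m + 2) * s (m + 3)) * (tword s (m + 2) * tword s (m + 3)) =
        tword s (m + 2) * tword s (m + 2) := by
      calc s (m + 3) * (s (m + 2) * s (m + 3)) * (tword s (m + 2) * tword s (m + 3))
          = s (m + 3) * (s (m + 2) * (s (m + 3) *
              ((tword s (m + 2) * s (m + 3)) * tword s (m + 2)))) := by
            rw [tword_succ s (m + 2)]; simp only [mul_assoc]
        _ = s (m + 3) * (s (m + 2) * (s (m + 3) *
              ((s (m + 2) * (s (m + 3) * (s (m + 2) * tword s (m + 2)))) *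
                tword s (m + 2)))) := by rw [htt]
        _ = (s (m + 3) * s (m + 2) * s (m + 3) * s (m + 2) * s (m + 3) * s (m + 2)) *
              (tword s (m + 2) * tword s (m + 2)) := by simp only [mul_assoc]
        _ = (s (m + 2) * s (m + 3) * s (m + 2) * s (m + 2) * s (m + 3) * s (m + 2)) *
              (tword s (m + 2) * tword s (m + 2)) := by
            rw [← hb (m + 2) (by omega) (by omega)]
        _ = (s (m + 2) * s (m + 3) * s (m + 3) * s (m + 2)) *
              (tword s (m + 2) * tword s (m + 2)) := by
            rw [mul_assoc (s (m + 2) * s (m + 3)) (s (m + 2)) (s (m + 2)),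
              hs (m + 2) (by omega) (by omega), mul_one]
        _ = tword s (m + 2) * tword s (m + 2) := by
            rw [mul_assoc (s (m + 2)) (s (m + 3)) (s (m + 3)),
              hs (m + 3) (by omega) (by omega), mul_one,
              hs (m + 2) (by omega) (by omega), one_mul]
    calc (rwordA s (m + 3) * rwordA s (m + 2)) ^ 2 * rwordA s (m + 4) * rwordA s 3 *
          rwordA s (m + 4) * rwordA s (m + 2) * rwordA s (m + 4)
        = uword s (m + 2) * (uword s (m + 2) *
            ((rwordA s (m + 4) * rwordA s 3 * rwordA s (m + 4)) *
              (rwordA s (m + 2) * rwordA s (m + 4)))) := by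
          rw [pow_two, hU]; simp only [mul_assoc]
      _ = uword s (m + 2) * (uword s (m + 2) *
            ((s (m + 3) * (s (m + 2) * s (m + 3))) *
              (tword s (m + 2) * tword s (m + 3)))) := by rw [hC3, hBT]
      _ = uword s (m + 2) * (uword s (m + 2) *
            (tword s (m + 2) * tword s (m + 2))) := by rw [hW]
      _ = uword s (m + 2) * ((uword s (m + 2) * tword s (m + 2)) * tword s (m + 2)) := by
          simp only [mul_assoc]
      _ = 1 := by
          rw [ut hs hb hc (m + 2) (by omega), one_mul, ut hs hb hc (m + 2) (by omega)]
  · -- Rd10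
    intro l k h4 hln h3 hkl
    show rwordA s l * rwordA s (l - k + 2) * rwordA s 2 * rwordA s (l - k + 2) *
        rwordA s l * rwordA s k * rwordA s 2 * rwordA s k = 1
    rw [rword_two]
    have hA : rwordA s (l - k + 2) * (s 1 * rwordA s (l - k + 2)) = s (l - k + 2 - 1) :=
      rconj1 hs hb hc (l - k + 2) (by omega) (by omega)
    have hB : rwordA s k * (s 1 * rwordA s k) = s (k - 1) :=
      rconj1 hs hb hc k (by omega) (by omega)
    have hC' : rwordA s l * s (l - k + 2 - 1) = s (k - 1) * rwordA s l := by
      have h := rconj hs hb hc l hln (l - k + 2 - 1) (by omega) (by omega)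
      rwa [show l - (l - k + 2 - 1) = k - 1 by omega] at h
    calc rwordA s l * rwordA s (l - k + 2) * s 1 * rwordA s (l - k + 2) *
          rwordA s l * rwordA s k * s 1 * rwordA s k
        = rwordA s l * ((rwordA s (l - k + 2) * (s 1 * rwordA s (l - k + 2))) *
            (rwordA s l * (rwordA s k * (s 1 * rwordA s k)))) := by simp only [mul_assoc]
      _ = (rwordA s l * s (l - k + 2 - 1)) * (rwordA s l * s (k - 1)) := by
          rw [hA, hB]; simp only [mul_assoc]
      _ = (s (k - 1) * rwordA s l) * (rwordA s l * s (k - 1)) := by rw [hC']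
      _ = s (k - 1) * ((rwordA s l * rwordA s l) * s (k - 1)) := by
          simp only [mul_assoc]
      _ = s (k - 1) * s (k - 1) := by rw [rsq hs hb hc l hln, one_mul]
      _ = 1 := hs (k - 1) (by omega) (by omega)
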